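/- Let c ≥ 1 and n be integers with d = ⌈log₂ c⌉ and n > d. For a bitstring x ∈ {0,1}^{n+1} (bits indexed i = 0, …, n), define f(x) = Σ_{i=0}^{d} 2^i x_i + 2^{d+1} Σ_{i=d+1}^{n} x_i − (c − 1/2). Then the number of bitstrings x ∈ {0,1}^{n+1} with f(x) < 0 is exactly c. -/

import Mathlib

open Finset

private lemma sum_bits_lt (b : ℕ → Bool) (k : ℕ) :
    ∑ i ∈ Finset.range k, 2 ^ i * (b i).toNat < 2 ^ k := by
  induction k with
  | zero => simp
  | succ k ih =>
    rw [Finset.sum_range_succ, pow_succ]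
    have h1 : (b k).toNat ≤ 1 := Bool.toNat_le _
    nlinarith [Nat.two_pow_pos k]

private lemma testBit_sum_bits (b : ℕ → Bool) (k : ℕ) :
    ∀ j < k, (∑ i ∈ Finset.range k, 2 ^ i * (b i).toNat).testBit j = b j := by
  induction k with
  | zero => intro j hj; omega
  | succ k ih =>
    intro j hj
    rw [Finset.sum_range_succ, Nat.add_comm,
      Nat.testBit_two_pow_mul_add _ (sum_bits_lt b k) j]
    by_cases h : j < k
    · simp [h, ih j h]
    · have : j = k := by omega
      subst this
      simp only [lt_irrefl, if_false, Nat.sub_self]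
      cases b j <;> simp

private lemma sum_testBit_eq (k m : ℕ) (hm : m < 2 ^ k) :
    ∑ i ∈ Finset.range k, 2 ^ i * (m.testBit i).toNat = m := by
  apply Nat.eq_of_testBit_eq
  intro j
  by_cases hj : j < k
  · exact testBit_sum_bits _ k j hj
  · have h1 : (2:ℕ) ^ k ≤ 2 ^ j := Nat.pow_le_pow_right (by norm_num) (by omega)
    rw [Nat.testBit_lt_two_pow (lt_of_lt_of_le (sum_bits_lt _ k) h1),
        Nat.testBit_lt_two_pow (lt_of_lt_of_le hm h1)]

noncomputable def fz (c n : ℕ) (x : Fin (n + 1) → Bool) : ℝ :=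
  (∑ i : Fin (n + 1),
      (if (i : ℕ) ≤ Nat.clog 2 c then (2 : ℝ) ^ (i : ℕ) else 2 ^ (Nat.clog 2 c + 1)) *
        (if x i then 1 else 0))
    - ((c : ℝ) - 1 / 2)

theorem card_negative_energy_bitstrings
    (c n : ℕ) (hc : 1 ≤ c) (hn : Nat.clog 2 c < n) :
    Nat.card {x : Fin (n + 1) → Bool // fz c n x < 0} = c := by
  set d := Nat.clog 2 c with hd
  have hc2 : c ≤ 2 ^ d := Nat.le_pow_clog (by norm_num) c
  have hc3 : c < 2 ^ (d + 1) :=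
    lt_of_le_of_lt hc2 (Nat.pow_lt_pow_right (by norm_num) (by omega))
  let g : (Fin (n + 1) → Bool) → ℕ := fun x =>
    ∑ i : Fin (n + 1), (if (i : ℕ) ≤ d then 2 ^ (i : ℕ) else 2 ^ (d + 1)) * (x i).toNat
  have hfz : ∀ x, fz c n x = (g x : ℝ) - ((c : ℝ) - 1 / 2) := by
    intro x
    unfold fz
    congr 1
    show _ = ((∑ i : Fin (n + 1),
        (if (i : ℕ) ≤ d then 2 ^ (i : ℕ) else 2 ^ (d + 1)) * (x i).toNat : ℕ) : ℝ)
    push_cast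
    refine Finset.sum_congr rfl fun i _ => ?_
    cases x i <;> simp [hd]
  have hiff : ∀ x, fz c n x < 0 ↔ g x < c := by
    intro x
    rw [hfz]
    constructor
    · intro h
      by_contra hge
      push_neg at hge
      have : (c : ℝ) ≤ (g x : ℝ) := by exact_mod_cast hge
      linarith
    · intro h
      have : (g x : ℝ) + 1 ≤ (c : ℝ) := by exact_mod_cast h
      linarith
  rw [Nat.card_congr (Equiv.subtypeEquivRight hiff)]
  have hg_eval : ∀ b : ℕ → Bool,
      g (fun i : Fin (n + 1) => decide ((i : ℕ) ≤ d) && b (i : ℕ)) =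
        ∑ i ∈ Finset.range (d + 1), 2 ^ i * (b i).toNat := by
    intro b
    show (∑ i : Fin (n + 1), (if (i : ℕ) ≤ d then 2 ^ (i : ℕ) else 2 ^ (d + 1)) *
        ((decide ((i : ℕ) ≤ d) && b (i : ℕ))).toNat) = _
    rw [Fin.sum_univ_eq_sum_range
      (fun i => (if i ≤ d then 2 ^ i else 2 ^ (d + 1)) * ((decide (i ≤ d) && b i)).toNat)]
    rw [← Finset.sum_subset (Finset.range_subset_range.mpr (show d + 1 ≤ n + 1 by omega))]
    · refine Finset.sum_congr rfl fun i hi => ?_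
      have : i ≤ d := Nat.lt_succ_iff.mp (Finset.mem_range.mp hi)
      simp [this]
    · intro i _ hi
      have : ¬ i ≤ d := by simp at hi; omega
      simp [this]
  let e : Fin c → {x : Fin (n + 1) → Bool // g x < c} := fun m =>
    ⟨fun i => decide ((i : ℕ) ≤ d) && (m : ℕ).testBit (i : ℕ), by
      rw [hg_eval, sum_testBit_eq (d + 1) m (lt_trans m.isLt hc3)]
      exact m.isLt⟩
  have hge : ∀ m : Fin c, g (e m).1 = (m : ℕ) := by
    intro m
    show g (fun i : Fin (n + 1) => decide ((i : ℕ) ≤ d) && (m : ℕ).testBit (i : ℕ)) = (m : ℕ)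
    rw [hg_eval]
    exact sum_testBit_eq (d + 1) m (lt_trans m.isLt hc3)
  have hbij : Function.Bijective e := by
    constructor
    · intro m₁ m₂ h
      have := congrArg (fun y => g y.1) h
      simp only [hge] at this
      exact Fin.ext this
    · rintro ⟨x, hx⟩
      have hhigh : ∀ i : Fin (n + 1), d < (i : ℕ) → x i = false := by
        intro i hi
        by_contra hxi
        have hxi' : x i = true := by simpa using hxi
        have hle : (if (i : ℕ) ≤ d then 2 ^ (i : ℕ) else 2 ^ (d + 1)) * (x i).toNat ≤ g x :=
          Finset.single_le_sum
            (f := fun j : Fin (n + 1) =>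
              (if (j : ℕ) ≤ d then 2 ^ (j : ℕ) else 2 ^ (d + 1)) * (x j).toNat)
            (fun j _ => Nat.zero_le _) (Finset.mem_univ i)
        rw [hxi', if_neg (by omega)] at hle
        simp at hle
        omega
      set b : ℕ → Bool := fun j => if h : j < n + 1 then x ⟨j, h⟩ else false with hb
      have hxb : x = fun i : Fin (n + 1) => decide ((i : ℕ) ≤ d) && b (i : ℕ) := by
        funext i
        by_cases hi : (i : ℕ) ≤ d
        · simp [hb, hi, i.isLt, Fin.is_le i]
        · simp [hi, hhigh i (by omega)]
      have hgx : g x = ∑ i ∈ Finset.range (d + 1), 2 ^ i * (b i).toNat := by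
        rw [hxb, hg_eval]
      refine ⟨⟨g x, hx⟩, Subtype.ext ?_⟩
      show (fun i : Fin (n + 1) => decide ((i : ℕ) ≤ d) && (g x).testBit (i : ℕ)) = x
      funext i
      by_cases hi : (i : ℕ) ≤ d
      · rw [hgx, testBit_sum_bits b (d + 1) (i : ℕ) (by omega)]
        simp [hi, hb, i.isLt, Fin.is_le i]
      · simp [hi, hhigh i (by omega)]
  rw [Nat.card_congr (Equiv.ofBijective e hbij).symm]
  simp
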